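/- For α, γ ∈ (0,1), setting v₀ = ((1−2^{−γ})^{−1/(1−α)} − 1)^{−α}, one has v₀ ∈ (0,1) and v₀ + 2^γ((1+v₀^{1/α})^α − v₀) equals (1 − 2^γ + 2^γ(1−2^{−γ})^{−α/(1−α)}) / ((1−2^{−γ})^{−1/(1−α)} − 1)^α. In particular, v₀ solves the critical point equation 1 + 2^γ((1+v^{−1/α})^{α−1} − 1) = 0. -/

import Mathlib

theorem stmt8 (α γ : ℝ) (hα : α ∈ Set.Ioo (0:ℝ) 1) (hγ : γ ∈ Set.Ioo (0:ℝ) 1)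
    (v₀ : ℝ) (hv₀ : v₀ = ((1 - (2:ℝ) ^ (-γ)) ^ (-1/(1-α)) - 1) ^ (-α)) :
    v₀ ∈ Set.Ioo (0:ℝ) 1 ∧
    v₀ + (2:ℝ) ^ γ * ((1 + v₀ ^ (1/α)) ^ α - v₀)
      = (1 - (2:ℝ) ^ γ + (2:ℝ) ^ γ * (1 - (2:ℝ) ^ (-γ)) ^ (-α/(1-α)))
        / ((1 - (2:ℝ) ^ (-γ)) ^ (-1/(1-α)) - 1) ^ α ∧
    1 + (2:ℝ) ^ γ * ((1 + v₀ ^ (-1/α)) ^ (α - 1) - 1) = 0 := by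
  obtain ⟨hα0, hα1⟩ := hα
  obtain ⟨hγ0, hγ1⟩ := hγ
  have h1α : (0:ℝ) < 1 - α := by linarith
  set a : ℝ := (2:ℝ) ^ (-γ) with ha
  have ha0 : 0 < a := Real.rpow_pos_of_pos (by norm_num) _
  have ha1 : a < 1 := by
    have := Real.rpow_lt_one_of_one_lt_of_neg (x := (2:ℝ)) (by norm_num) (by linarith : -γ < 0)
    simpa [ha] using this
  have hahalf : 1/2 < a := by
    have : (2:ℝ) ^ (-1:ℝ) < (2:ℝ) ^ (-γ) :=
      Real.rpow_lt_rpow_left_iff (x := (2:ℝ)) (by norm_num) |>.mpr (by linarith)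
    have h2 : (2:ℝ) ^ (-1:ℝ) = 1/2 := by
      rw [Real.rpow_neg_one]; norm_num
    rw [h2] at this; exact this
  set c : ℝ := 1 - a with hcdef
  have hc0 : 0 < c := by simp [hcdef]; linarith
  have hchalf : c < 1/2 := by simp [hcdef]; linarith
  set t : ℝ := c ^ (-1/(1-α)) with htdef
  have ht0 : 0 < t := Real.rpow_pos_of_pos hc0 _
  -- t > 2
  have hexp1 : (1:ℝ) < 1/(1-α) := by
    rw [lt_div_iff₀ h1α]; linarith
  have hct : c ^ (1/(1-α)) < 1/2 := by
    calc c ^ (1/(1-α)) < c ^ (1:ℝ) := by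
          apply Real.rpow_lt_rpow_of_exponent_gt hc0 (by linarith) hexp1
      _ = c := by simp
      _ < 1/2 := hchalf
  have htinv : t = (c ^ (1/(1-α)))⁻¹ := by
    rw [htdef, neg_div, Real.rpow_neg hc0.le]
  have ht2 : 2 < t := by
    rw [htinv]
    have hp : 0 < c ^ (1/(1-α)) := Real.rpow_pos_of_pos hc0 _
    rw [lt_inv_comm₀ (by norm_num) hp]
    linarith
  have ht1 : (1:ℝ) < t - 1 := by linarith
  have ht1p : (0:ℝ) < t - 1 := by linarith
  have hαne : α ≠ 0 := ne_of_gt hα0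
  -- v₀ facts
  have hv : v₀ = (t-1) ^ (-α) := hv₀
  have hv0 : 0 < v₀ := hv ▸ Real.rpow_pos_of_pos ht1p _
  have hvlt1 : v₀ < 1 := by
    rw [hv]
    exact Real.rpow_lt_one_of_one_lt_of_neg ht1 (by linarith)
  -- v₀ ^ (1/α) = (t-1)⁻¹
  have hvpow : v₀ ^ (1/α) = (t-1)⁻¹ := by
    rw [hv, ← Real.rpow_mul ht1p.le, show -α * (1/α) = -1 by field_simp,
      Real.rpow_neg_one]
  -- v₀ ^ (-1/α) = t - 1
  have hvpow2 : v₀ ^ (-1/α) = t - 1 := by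
    rw [hv, ← Real.rpow_mul ht1p.le]
    rw [show -α * (-1/α) = 1 by field_simp]
    simp
  -- t ^ (α-1) = c
  have htc : t ^ (α - 1) = c := by
    rw [htdef, ← Real.rpow_mul hc0.le]
    rw [show -1/(1-α) * (α-1) = 1 by field_simp; ring]
    simp
  -- t ^ α = c ^ (-α/(1-α))
  have htα : t ^ α = c ^ (-α/(1-α)) := by
    rw [htdef, ← Real.rpow_mul hc0.le]
    ring_nf
  refine ⟨⟨hv0, hvlt1⟩, ?_, ?_⟩
  · -- main equality
    have h1 : 1 + v₀ ^ (1/α) = t / (t-1) := by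
      rw [hvpow]; field_simp; ring
    have h2 : (1 + v₀ ^ (1/α)) ^ α = t ^ α / (t-1) ^ α := by
      rw [h1, Real.div_rpow ht0.le ht1p.le]
    have h3 : v₀ = ((t-1) ^ α)⁻¹ := by
      rw [hv, Real.rpow_neg ht1p.le]
    have hpos : (0:ℝ) < (t-1) ^ α := Real.rpow_pos_of_pos ht1p _
    rw [h2, h3, ← htα]
    field_simp
    ring
  · -- critical point
    have h1 : 1 + v₀ ^ (-1/α) = t := by rw [hvpow2]; ring
    rw [h1, htc, hcdef]
    have : (2:ℝ) ^ γ * a = 1 := by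
      rw [ha, ← Real.rpow_add (by norm_num)]
      simp
    nlinarith [this]
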